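/- Fix an integer n with 2 ≤ n ≤ k and 1 ≤ r ≤ m+1, and consider the smooth vector fields on (ℝ^{m+1})^{k+1} given by W_r(x) = (x_n^r − x_{n−1}^r)·Y_n(x) + e_r^{(n)} and Y_n. Then their Lie bracket (defined by [X, Y](x) = DY(x)[X(x)] − DX(x)[Y(x)]) satisfies, at every x ∈ (ℝ^{m+1})^{k+1}: [W_r, Y_n](x) = (x_n^r − x_{n−1}^r)·Y_n(x) + (x_{n−1}^r − x_{n−2}^r)·Y_{n−1}(x) + e_r^{(n−1)}. -/

import Mathlib

noncomputable section

open scoped RealInnerProductSpace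

namespace ArticulatedArm

/-- `ℝ^{m+1}` with the Euclidean structure. -/
abbrev Vec (m : ℕ) : Type := EuclideanSpace ℝ (Fin (m + 1))

/-- `(ℝ^{m+1})^{k+1}` with the Euclidean (product) structure. -/
abbrev Tup (m k : ℕ) : Type := PiLp 2 (fun _ : Fin (k + 1) => Vec m)

open Fin.NatCast in
/-- The segment vector `x_{i+1} - x_i`. -/
def seg (m k : ℕ) (x : Tup m k) (i : ℕ) : Vec m :=
  x ((i + 1 : ℕ) : Fin (k + 1)) - x ((i : ℕ) : Fin (k + 1))

/-- The configuration space `C^k(m)`. -/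
def Conf (m k : ℕ) : Set (Tup m k) := {x | ∀ i, i < k → ‖seg m k x i‖ = 1}

/-- `A_{i,j}(x) = ⟨x_{i+1} - x_i, x_{j+1} - x_j⟩`. -/
def AA (m k : ℕ) (x : Tup m k) (i j : ℕ) : ℝ := ⟪seg m k x i, seg m k x j⟫

/-- `A_i(x) = A_{i,i-1}(x)`. -/
def Acoef (m k : ℕ) (x : Tup m k) (i : ℕ) : ℝ := AA m k x i (i - 1)

/-- `Z_i(x)`: the tuple whose `i`-th component is `x_{i+1} - x_i` and the others `0`. -/
def Zt (m k : ℕ) (x : Tup m k) (i : ℕ) : Tup m k :=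
  WithLp.toLp 2 (fun l : Fin (k + 1) => if (l : ℕ) = i then seg m k x i else 0)

/-- `N_i(x)`: the tuple with `i`-th component `-(x_{i+1} - x_i)`, `(i+1)`-th component
`x_{i+1} - x_i`, and the others `0`. -/
def Nt (m k : ℕ) (x : Tup m k) (i : ℕ) : Tup m k :=
  WithLp.toLp 2 (fun l : Fin (k + 1) => if (l : ℕ) = i then -(seg m k x i)
    else if (l : ℕ) = i + 1 then seg m k x i else 0)

/-- `Y_n(x) = Σ_{i=0}^{n-1} (Π_{j=i+1}^{n-1} A_j(x)) Z_i(x)`. -/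
def Yt (m k : ℕ) (x : Tup m k) (n : ℕ) : Tup m k :=
  ∑ i ∈ Finset.range n, (∏ j ∈ Finset.Ico (i + 1) n, Acoef m k x j) • Zt m k x i

/-- `Ψ_i(x) = ‖x_{i+1} - x_i‖² - 1`. -/
def Psi (m k : ℕ) (i : ℕ) (x : Tup m k) : ℝ := ‖seg m k x i‖ ^ 2 - 1

/-- `e_r^{(i)}`: the tuple whose `i`-th component is the `r`-th standard basis
vector of `ℝ^{m+1}` and whose other components are `0`. -/
def et (m k : ℕ) (i : ℕ) (r : Fin (m + 1)) : Tup m k :=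
  WithLp.toLp 2 (fun l : Fin (k + 1) => if (l : ℕ) = i then EuclideanSpace.single r (1 : ℝ) else 0)

set_option synthInstance.maxHeartbeats 400000
set_option maxHeartbeats 4000000

def segL (m k : ℕ) (i : ℕ) : Tup m k →L[ℝ] Vec m :=
  LinearMap.toContinuousLinearMap
  { toFun := fun y => seg m k y i
    map_add' := fun a b => by simp only [seg, PiLp.add_apply]; abel
    map_smul' := fun c a => by
      simp only [seg, PiLp.smul_apply, RingHom.id_apply, smul_sub] }
@[simp] lemma segL_apply (m k i : ℕ) (y : Tup m k) : segL m k i y = seg m k y i := rfl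
def ZL (m k : ℕ) (i : ℕ) : Tup m k →L[ℝ] Tup m k :=
  LinearMap.toContinuousLinearMap
  { toFun := fun y => Zt m k y i
    map_add' := fun a b => by
      ext l : 1
      simp only [Zt, PiLp.add_apply, PiLp.toLp_apply]
      split
      · simp [seg, PiLp.add_apply]; abel
      · simp
    map_smul' := fun c a => by
      ext l : 1
      simp only [Zt, PiLp.smul_apply, RingHom.id_apply, PiLp.toLp_apply]
      split
      · simp [seg, PiLp.smul_apply, smul_sub]
      · simp }
@[simp] lemma ZL_apply (m k i : ℕ) (y : Tup m k) : ZL m k i y = Zt m k y i := rfl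

/-- derivative of `Acoef · j` at `x`. -/
def dA (m k : ℕ) (x : Tup m k) (j : ℕ) : Tup m k →L[ℝ] ℝ :=
  (innerSL ℝ (seg m k x (j - 1))).comp (segL m k j)
    + (innerSL ℝ (seg m k x j)).comp (segL m k (j - 1))

@[simp] lemma dA_apply (m k : ℕ) (x v : Tup m k) (j : ℕ) :
    dA m k x j v = ⟪seg m k x (j-1), seg m k v j⟫ + ⟪seg m k x j, seg m k v (j-1)⟫ := rfl

lemma hasFDerivAt_A (m k : ℕ) (x : Tup m k) (j : ℕ) :
    HasFDerivAt (fun y => Acoef m k y j) (dA m k x j) x := by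
  have h := HasFDerivAt.inner ℝ ((segL m k j).hasFDerivAt (x := x))
    ((segL m k (j-1)).hasFDerivAt (x := x))
  refine h.congr_fderiv ?_
  ext v
  simp only [ContinuousLinearMap.add_apply, ContinuousLinearMap.comp_apply,
    innerSL_apply_apply, segL_apply, fderivInnerCLM_apply, ContinuousLinearMap.prod_apply,
    dA_apply]
  rw [real_inner_comm (seg m k x (j - 1)) (seg m k v j)]
  exact add_comm (⟪seg m k x j, seg m k v (j - 1)⟫) (⟪seg m k x (j - 1), seg m k v j⟫)

/-- coefficient product -/
def cP (m k n : ℕ) (x : Tup m k) (i : ℕ) : ℝ := ∏ j ∈ Finset.Ico (i + 1) n, Acoef m k x j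

/-- derivative of `cP` -/
def dC (m k n : ℕ) (x : Tup m k) (i : ℕ) : Tup m k →L[ℝ] ℝ :=
  ∑ j ∈ Finset.Ico (i + 1) n,
    (∏ j' ∈ (Finset.Ico (i + 1) n).erase j, Acoef m k x j') • dA m k x j

lemma hasFDerivAt_cP (m k n : ℕ) (x : Tup m k) (i : ℕ) :
    HasFDerivAt (fun y => cP m k n y i) (dC m k n x i) x :=
  HasFDerivAt.finset_prod (fun j _ => hasFDerivAt_A m k x j)

/-- derivative of `Yt · n` -/
def DYm (m k n : ℕ) (x : Tup m k) : Tup m k →L[ℝ] Tup m k :=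
  ∑ i ∈ Finset.range n,
    (cP m k n x i • ZL m k i + (dC m k n x i).smulRight (Zt m k x i))

lemma hasFDerivAt_Y (m k n : ℕ) (x : Tup m k) :
    HasFDerivAt (fun y : Tup m k => Yt m k y n) (DYm m k n x) x := by
  have : ∀ i ∈ Finset.range n, HasFDerivAt (fun y : Tup m k => cP m k n y i • Zt m k y i)
      (cP m k n x i • ZL m k i + (dC m k n x i).smulRight (Zt m k x i)) x := by
    intro i _
    exact (hasFDerivAt_cP m k n x i).smul ((ZL m k i).hasFDerivAt)
  exact HasFDerivAt.fun_sum this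

lemma sum_apply' {m k : ℕ} {s : Finset ℕ} (f : ℕ → Tup m k) (l : Fin (k + 1)) :
    (∑ i ∈ s, f i) l = ∑ i ∈ s, f i l := by
  rw [WithLp.ofLp_sum, Finset.sum_apply]

lemma Yt_apply (m k n : ℕ) (x : Tup m k) (l : Fin (k + 1)) :
    Yt m k x n l = ∑ i ∈ Finset.range n, cP m k n x i • Zt m k x i l := by
  rw [Yt, sum_apply']
  refine Finset.sum_congr rfl fun i _ => ?_
  rw [PiLp.smul_apply]; rfl

open Fin.NatCast in
lemma seg_et (m k n j : ℕ) (r : Fin (m + 1)) (hj : j < k) :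
    seg m k (et m k n r) j =
      if j + 1 = n then EuclideanSpace.single r (1 : ℝ)
      else if j = n then -(EuclideanSpace.single r (1 : ℝ)) else 0 := by
  have h1 : (((j + 1 : ℕ)) : Fin (k + 1)).val = j + 1 := Fin.val_cast_of_lt (by omega)
  have h2 : (((j : ℕ)) : Fin (k + 1)).val = j := Fin.val_cast_of_lt (by omega)
  rw [seg, et]
  show (if (((j + 1 : ℕ)) : Fin (k + 1)).val = n then EuclideanSpace.single r (1:ℝ) else 0)
    - (if (((j : ℕ)) : Fin (k + 1)).val = n then EuclideanSpace.single r (1:ℝ) else 0) = _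
  rw [h1, h2]
  split_ifs with a b c <;> first | (exfalso; omega) | abel | simp

lemma Zt_et (m k p i : ℕ) (r : Fin (m + 1)) (hi : i < p + 2) (hk : p + 2 ≤ k) :
    Zt m k (et m k (p + 2) r) i = if i = p + 1 then et m k (p + 1) r else 0 := by
  have hs := seg_et m k (p + 2) i r (by omega)
  ext l : 1
  by_cases h : i = p + 1
  · subst h
    have h0 : (if p + 1 = p + 1 then et m k (p + 1) r else (0 : Tup m k)) = et m k (p + 1) r :=
      if_pos rfl
    rw [h0]
    simp only [Zt, PiLp.toLp_apply]
    rw [hs, if_pos (by omega : p + 1 + 1 = p + 2)]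
    simp only [et, PiLp.toLp_apply]
  · rw [if_neg h]
    rw [Zt]
    have : seg m k (et m k (p + 2) r) i = 0 := by
      rw [hs]; rw [if_neg (by omega), if_neg (by omega)]
    rw [this]
    simp

lemma dA_et (m k p j : ℕ) (x : Tup m k) (r : Fin (m + 1)) (hj1 : 1 ≤ j) (hj2 : j ≤ p + 1)
    (hk : p + 2 ≤ k) :
    dA m k x j (et m k (p + 2) r) = if j = p + 1 then seg m k x p r else 0 := by
  rw [dA_apply]
  rw [seg_et m k (p + 2) j r (by omega), seg_et m k (p + 2) (j - 1) r (by omega)]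
  rw [if_neg (by omega : ¬ (j - 1 + 1 = p + 2)), if_neg (by omega : ¬ (j - 1 = p + 2)),
    if_neg (by omega : ¬ (j = p + 2))]
  by_cases h : j = p + 1
  · subst h
    rw [if_pos rfl, if_pos rfl]
    have : ⟪seg m k x (p + 1 - 1), EuclideanSpace.single r (1 : ℝ)⟫
        = seg m k x p r := by
      rw [show p + 1 - 1 = p from rfl, EuclideanSpace.inner_single_right]
      simp
    simp only [Nat.add_sub_cancel] at this
    simp [this]
  · rw [if_neg (fun hh => h (by omega)), if_neg h]
    simp

lemma dC_et (m k p i : ℕ) (x : Tup m k) (r : Fin (m + 1)) (hi : i < p + 2) (hk : p + 2 ≤ k) :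
    dC m k (p + 2) x i (et m k (p + 2) r) =
      if i < p + 1 then cP m k (p + 1) x i * seg m k x p r else 0 := by
  rw [dC]
  rw [ContinuousLinearMap.sum_apply]
  have : ∀ j ∈ Finset.Ico (i + 1) (p + 2),
      ((∏ j' ∈ (Finset.Ico (i + 1) (p + 2)).erase j, Acoef m k x j') • dA m k x j)
        (et m k (p + 2) r)
      = if j = p + 1 then (∏ j' ∈ (Finset.Ico (i + 1) (p + 2)).erase j, Acoef m k x j')
          * seg m k x p r else 0 := by
    intro j hj
    rw [Finset.mem_Ico] at hj
    rw [ContinuousLinearMap.smul_apply, dA_et m k p j x r (by omega) (by omega) hk]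
    split <;> simp [mul_comm]
  rw [Finset.sum_congr rfl this, Finset.sum_ite_eq' (Finset.Ico (i + 1) (p + 2)) (p + 1)]
  by_cases h : i < p + 1
  · rw [if_pos (by rw [Finset.mem_Ico]; omega), if_pos h]
    congr 1
    rw [cP]
    congr 1
    ext t
    simp only [Finset.mem_erase, Finset.mem_Ico]
    omega
  · rw [if_neg (by rw [Finset.mem_Ico]; omega), if_neg h]

open Fin.NatCast in
lemma Yt_apply_lt (m k n a : ℕ) (x : Tup m k) (ha : a ≤ k) :
    Yt m k x n ((a : ℕ) : Fin (k + 1)) =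
      if a < n then cP m k n x a • seg m k x a else 0 := by
  rw [Yt_apply]
  have hv : (((a : ℕ)) : Fin (k + 1)).val = a := Fin.val_cast_of_lt (by omega)
  have : ∀ i ∈ Finset.range n, cP m k n x i • Zt m k x i ((a : ℕ) : Fin (k + 1))
      = if a = i then cP m k n x i • seg m k x i else 0 := by
    intro i _
    rw [Zt]
    show cP m k n x i • (if (((a : ℕ)) : Fin (k + 1)).val = i then seg m k x i else 0) = _
    rw [hv]
    split <;> simp
  rw [Finset.sum_congr rfl this, Finset.sum_ite_eq (Finset.range n) a]
  simp only [Finset.mem_range]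

lemma cP_top (m k p : ℕ) (x : Tup m k) : cP m k (p + 2) x (p + 1) = 1 := by
  rw [cP, Finset.Ico_self, Finset.prod_empty]

lemma DYm_et (m k p : ℕ) (x : Tup m k) (r : Fin (m + 1)) (hk : p + 2 ≤ k) :
    DYm m k (p + 2) x (et m k (p + 2) r) =
      seg m k x p r • Yt m k x (p + 1) + et m k (p + 1) r := by
  rw [DYm, ContinuousLinearMap.sum_apply]
  have hterm : ∀ i ∈ Finset.range (p + 2),
      (cP m k (p + 2) x i • ZL m k i + (dC m k (p + 2) x i).smulRight (Zt m k x i))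
        (et m k (p + 2) r)
      = (if i = p + 1 then cP m k (p + 2) x i • et m k (p + 1) r else 0)
        + (if i < p + 1 then (cP m k (p + 1) x i * seg m k x p r) • Zt m k x i else 0) := by
    intro i hi
    rw [Finset.mem_range] at hi
    rw [ContinuousLinearMap.add_apply, ContinuousLinearMap.smul_apply,
      ContinuousLinearMap.smulRight_apply, ZL_apply, Zt_et m k p i r hi hk,
      dC_et m k p i x r hi hk]
    congr 1
    · split <;> simp
    · split <;> simp
  rw [Finset.sum_congr rfl hterm, Finset.sum_add_distrib]
  have h1 : (∑ i ∈ Finset.range (p + 2),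
      if i = p + 1 then cP m k (p + 2) x i • et m k (p + 1) r else 0) = et m k (p + 1) r := by
    rw [Finset.sum_ite_eq' (Finset.range (p + 2)) (p + 1)]
    rw [if_pos (Finset.mem_range.mpr (by omega)), cP_top, one_smul]
  have h2 : (∑ i ∈ Finset.range (p + 2),
      if i < p + 1 then (cP m k (p + 1) x i * seg m k x p r) • Zt m k x i else 0)
      = seg m k x p r • Yt m k x (p + 1) := by
    rw [Yt, Finset.smul_sum]
    rw [← Finset.sum_subset (Finset.range_subset_range.mpr (by omega : p + 1 ≤ p + 2))
      (fun i _ hni => by rw [if_neg (by simpa using hni)])]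
    refine Finset.sum_congr rfl fun i hi => ?_
    rw [Finset.mem_range] at hi
    rw [if_pos hi, mul_comm, mul_smul]
    rfl
  rw [h1, h2, add_comm]


/-- for `2 ≤ n ≤ k` and the vector fields
`W_r(x) = (x_n^r - x_{n-1}^r)·Y_n(x) + e_r^{(n)}` and `Y_n`, the Lie bracket
`[W_r, Y_n](x) = DY_n(x)[W_r(x)] - DW_r(x)[Y_n(x)]` equals
`(x_n^r - x_{n-1}^r)·Y_n(x) + (x_{n-1}^r - x_{n-2}^r)·Y_{n-1}(x) + e_r^{(n-1)}`. -/
theorem statement16 (m k : ℕ) (hm : 2 ≤ m) (hk : 2 ≤ k) (n : ℕ) (hn2 : 2 ≤ n)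
    (hnk : n ≤ k) (r : Fin (m + 1)) (x : Tup m k) :
    let W : Tup m k → Tup m k := fun y => (seg m k y (n - 1) r) • Yt m k y n + et m k n r
    ∃ DW DY : Tup m k →L[ℝ] Tup m k,
      HasFDerivAt W DW x ∧ HasFDerivAt (fun y : Tup m k => Yt m k y n) DY x ∧
      DY (W x) - DW (Yt m k x n) =
        (seg m k x (n - 1) r) • Yt m k x n + (seg m k x (n - 2) r) • Yt m k x (n - 1)
          + et m k (n - 1) r := by
  obtain ⟨p, rfl⟩ : ∃ p, n = p + 2 := ⟨n - 2, by omega⟩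
  intro W
  set fL : Tup m k →L[ℝ] ℝ := (EuclideanSpace.proj r).comp (segL m k (p + 1)) with hfLdef
  refine ⟨seg m k x (p + 1) r • DYm m k (p + 2) x + fL.smulRight (Yt m k x (p + 2)),
    DYm m k (p + 2) x, ?_, hasFDerivAt_Y m k (p + 2) x, ?_⟩
  · have h := (fL.hasFDerivAt (x := x)).smul (hasFDerivAt_Y m k (p + 2) x)
    exact h.add_const (et m k (p + 2) r)
  · have hY2 : (open Fin.NatCast in Yt m k x (p + 2) (((p + 2 : ℕ)) : Fin (k + 1))) = 0 := by
      rw [Yt_apply_lt m k (p + 2) (p + 2) x (by omega), if_neg (by omega)]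
    have hY1 : (open Fin.NatCast in Yt m k x (p + 2) (((p + 1 : ℕ)) : Fin (k + 1))) = seg m k x (p + 1) := by
      rw [Yt_apply_lt m k (p + 2) (p + 1) x (by omega), if_pos (by omega), cP_top, one_smul]
    have hfL : fL (Yt m k x (p + 2)) = -(seg m k x (p + 1) r) := by
      show (seg m k (Yt m k x (p + 2)) (p + 1)) r = _
      rw [seg, show ((p + 1) + 1) = p + 2 from rfl, hY2, hY1]
      rw [zero_sub, PiLp.neg_apply]
    have hWx : W x = seg m k x (p + 1) r • Yt m k x (p + 2) + et m k (p + 2) r := rfl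
    rw [hWx, map_add, map_smul, ContinuousLinearMap.add_apply,
      ContinuousLinearMap.smul_apply, ContinuousLinearMap.smulRight_apply, hfL,
      DYm_et m k p x r hnk]
    show seg m k x (p + 1) r • (DYm m k (p + 2) x) (Yt m k x (p + 2))
        + (seg m k x p r • Yt m k x (p + 1) + et m k (p + 1) r)
        - (seg m k x (p + 1) r • (DYm m k (p + 2) x) (Yt m k x (p + 2))
          + (-(seg m k x (p + 1) r)) • Yt m k x (p + 2))
      = seg m k x (p + 1) r • Yt m k x (p + 2) + seg m k x p r • Yt m k x (p + 1)
          + et m k (p + 1) r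
    rw [neg_smul]
    abel

end ArticulatedArm
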